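/- Fix L > 0 and k ≥ 1. The map h_k : C → C_k defined by h_k(R, θ) = (R^{l_k/l}, arccos(tanh(k·arccosh(1/sin θ)))) satisfies sup over C of the hyperbolic operator norm of its differential equal to k, and the supremum is attained on the short side θ = π/2. Consequently h_k is k-Lipschitz with respect to the hyperbolic metrics. -/

import Mathlib

open Real Set

/-- The inverse hyperbolic cosine, `arccosh x = log (x + √(x² - 1))`. -/
noncomputable def arccosh (x : ℝ) : ℝ := Real.log (x + Real.sqrt (x ^ 2 - 1))

/-- The hyperbolic distance between two points of the upper half-plane (viewed in `ℂ`). -/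
noncomputable def hdist (z w : ℂ) : ℝ :=
  2 * Real.arsinh (dist z w / (2 * Real.sqrt (z.im * w.im)))

lemma arccosh_nonneg {x : ℝ} (hx : 1 ≤ x) : 0 ≤ arccosh x := by
  apply Real.log_nonneg
  have : (0:ℝ) ≤ Real.sqrt (x^2-1) := Real.sqrt_nonneg _
  linarith

lemma cosh_arccosh {x : ℝ} (hx : 1 ≤ x) : Real.cosh (arccosh x) = x := by
  have h1 : (0:ℝ) ≤ x^2 - 1 := by nlinarith
  have hs : Real.sqrt (x^2-1) ^ 2 = x^2 - 1 := Real.sq_sqrt h1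
  have hy : (0:ℝ) < x + Real.sqrt (x^2-1) := by
    have := Real.sqrt_nonneg (x^2-1); linarith
  have hinv : (x + Real.sqrt (x^2-1))⁻¹ = x - Real.sqrt (x^2-1) :=
    inv_eq_of_mul_eq_one_right (by nlinarith)
  rw [arccosh, Real.cosh_eq, Real.exp_log hy, ← Real.log_inv, Real.exp_log (by positivity), hinv]
  ring

lemma sinh_arccosh {x : ℝ} (hx : 1 ≤ x) : Real.sinh (arccosh x) = Real.sqrt (x^2-1) := by
  have h1 : (0:ℝ) ≤ x^2 - 1 := by nlinarith
  have hs : Real.sqrt (x^2-1) ^ 2 = x^2 - 1 := Real.sq_sqrt h1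
  have hy : (0:ℝ) < x + Real.sqrt (x^2-1) := by
    have := Real.sqrt_nonneg (x^2-1); linarith
  have hinv : (x + Real.sqrt (x^2-1))⁻¹ = x - Real.sqrt (x^2-1) :=
    inv_eq_of_mul_eq_one_right (by nlinarith)
  rw [arccosh, Real.sinh_eq, Real.exp_log hy, ← Real.log_inv, Real.exp_log (by positivity), hinv]
  ring

-- sinh (k t) ≥ k sinh t for k ≥ 1, t ≥ 0
lemma mul_sinh_le {k t : ℝ} (hk : 1 ≤ k) (ht : 0 ≤ t) : k * Real.sinh t ≤ Real.sinh (k * t) := by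
  have hmono : MonotoneOn (fun t => Real.sinh (k * t) - k * Real.sinh t) (Ici 0) := by
    apply monotoneOn_of_deriv_nonneg (convex_Ici 0)
    · exact ((Real.continuous_sinh.comp (continuous_const.mul continuous_id)).sub
        (continuous_const.mul Real.continuous_sinh)).continuousOn
    · intro x hx
      apply DifferentiableAt.differentiableWithinAt
      fun_prop
    · intro x hx
      rw [interior_Ici, mem_Ioi] at hx
      have h1 : HasDerivAt (fun t => Real.sinh (k * t) - k * Real.sinh t)
          (Real.cosh (k * x) * k - k * Real.cosh x) x := by
        have := ((Real.hasDerivAt_sinh (k * x)).comp x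
          ((hasDerivAt_id x).const_mul k)).sub ((Real.hasDerivAt_sinh x).const_mul k)
        exact this.congr_deriv (by ring)
      rw [h1.deriv]
      have : Real.cosh x ≤ Real.cosh (k * x) := by
        rw [Real.cosh_le_cosh]
        rw [abs_of_nonneg hx.le, abs_of_nonneg (by nlinarith)]
        nlinarith
      nlinarith
  have h0 := hmono (self_mem_Ici) (show t ∈ Ici (0:ℝ) from ht) ht
  simp at h0
  linarith

lemma sinh_mul_le {a t : ℝ} (ha0 : 0 ≤ a) (ha1 : a ≤ 1) (ht : 0 ≤ t) :
    Real.sinh (a * t) ≤ a * Real.sinh t := by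
  rcases eq_or_lt_of_le ha0 with h | h
  · simp [← h]
  · have hk : 1 ≤ a⁻¹ := one_le_inv_iff₀.mpr ⟨h, ha1⟩
    have := mul_sinh_le hk (mul_nonneg ha0 ht)
    rw [show a⁻¹ * (a * t) = t by field_simp] at this
    calc Real.sinh (a*t) = a * (a⁻¹ * Real.sinh (a*t)) := by field_simp
    _ ≤ a * Real.sinh t := by nlinarith

-- cosh (k g) - 1 ≥ k^2 (cosh g - 1)
lemma cosh_mul_sub_one {k g : ℝ} (hk : 1 ≤ k) (hg : 0 ≤ g) :
    k^2 * (Real.cosh g - 1) ≤ Real.cosh (k * g) - 1 := by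
  have h1 : ∀ x : ℝ, Real.cosh x - 1 = 2 * Real.sinh (x/2)^2 := by
    intro x
    have := Real.cosh_two_mul (x/2)
    have h2 := Real.cosh_sq (x/2)
    rw [show 2 * (x/2) = x by ring] at this
    nlinarith
  rw [h1, h1]
  have hs := mul_sinh_le hk (by linarith : (0:ℝ) ≤ g/2)
  have hs0 : 0 ≤ Real.sinh (g/2) := Real.sinh_nonneg_iff.mpr (by linarith)
  have : k * (g/2) = k * g / 2 := by ring
  rw [← this]
  have hS2 : (k * Real.sinh (g/2))^2 ≤ Real.sinh (k*(g/2))^2 :=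
    pow_le_pow_left₀ (mul_nonneg (by linarith) hs0) hs 2
  nlinarith [hS2, sq_nonneg (Real.sinh (k*(g/2)) - k * Real.sinh (g/2)), mul_nonneg (mul_nonneg (by linarith : (0:ℝ) ≤ k) hs0) hs0]

-- cosh(k a) cosh b ≤ cosh(k b) cosh a for 0 ≤ a ≤ b, k ≥ 1
lemma cosh_ratio_mono {k a b : ℝ} (hk : 1 ≤ k) (ha : 0 ≤ a) (hab : a ≤ b) :
    Real.cosh (k * a) * Real.cosh b ≤ Real.cosh (k * b) * Real.cosh a := by
  have key : Real.cosh (k*b) * Real.cosh a - Real.cosh (k*a) * Real.cosh b =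
      Real.sinh ((k+1)*(a+b)/2) * Real.sinh ((k-1)*(b-a)/2)
      + Real.sinh ((k-1)*(a+b)/2) * Real.sinh ((k+1)*(b-a)/2) := by
    have e1 := Real.cosh_add ((k+1)*(a+b)/2) ((k-1)*(b-a)/2)
    have e2 := Real.cosh_sub ((k+1)*(a+b)/2) ((k-1)*(b-a)/2)
    have e3 := Real.cosh_add ((k-1)*(a+b)/2) ((k+1)*(b-a)/2)
    have e4 := Real.cosh_sub ((k-1)*(a+b)/2) ((k+1)*(b-a)/2)
    rw [show (k+1)*(a+b)/2 + (k-1)*(b-a)/2 = k*b + a by ring] at e1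
    rw [show (k+1)*(a+b)/2 - (k-1)*(b-a)/2 = k*a + b by ring] at e2
    rw [show (k-1)*(a+b)/2 + (k+1)*(b-a)/2 = k*b - a by ring] at e3
    rw [show (k-1)*(a+b)/2 - (k+1)*(b-a)/2 = k*a - b by ring] at e4
    have f1 := Real.cosh_add (k*b) a
    have f2 := Real.cosh_sub (k*b) a
    have f3 := Real.cosh_add (k*a) b
    have f4 := Real.cosh_sub (k*a) b
    nlinarith [e1,e2,e3,e4,f1,f2,f3,f4]
  have s1 : 0 ≤ Real.sinh ((k+1)*(a+b)/2) := Real.sinh_nonneg_iff.mpr (by nlinarith)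
  have s2 : 0 ≤ Real.sinh ((k-1)*(b-a)/2) := Real.sinh_nonneg_iff.mpr (by nlinarith)
  have s3 : 0 ≤ Real.sinh ((k-1)*(a+b)/2) := Real.sinh_nonneg_iff.mpr (by nlinarith)
  have s4 : 0 ≤ Real.sinh ((k+1)*(b-a)/2) := Real.sinh_nonneg_iff.mpr (by nlinarith)
  nlinarith [key]

-- main inequality, with d2 ≤ d1
lemma main_ineq_aux {k α d1 d2 ρ D : ℝ} (hk : 1 ≤ k) (hα0 : 0 ≤ α) (hα1 : α ≤ 1)
    (hd2 : 0 ≤ d2) (hd21 : d2 ≤ d1) (hρ : 0 ≤ ρ) (hD : 0 ≤ D)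
    (h1 : α * Real.cosh (k * d1) ≤ k * Real.cosh d1)
    (h2 : α * Real.cosh (k * d2) ≤ k * Real.cosh d2)
    (hcosh : Real.cosh D =
      Real.cosh d1 * Real.cosh d2 * Real.cosh ρ - Real.sinh d1 * Real.sinh d2) :
    Real.cosh (k * d1) * Real.cosh (k * d2) * Real.cosh (α * ρ)
      - Real.sinh (k * d1) * Real.sinh (k * d2) ≤ Real.cosh (k * D) := by
  have hd1 : 0 ≤ d1 := le_trans hd2 hd21
  have hc1 : (0:ℝ) < Real.cosh d1 := Real.cosh_pos _
  have hc2 : (0:ℝ) < Real.cosh d2 := Real.cosh_pos _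
  have hρ1 : (1:ℝ) ≤ Real.cosh ρ := Real.one_le_cosh ρ
  -- D ≥ d1 - d2
  have hΔD : d1 - d2 ≤ D := by
    have hΔ : Real.cosh (d1 - d2) ≤ Real.cosh D := by
      rw [hcosh, Real.cosh_sub]
      nlinarith [mul_pos hc1 hc2]
    have := Real.cosh_le_cosh.mp hΔ
    rw [abs_of_nonneg (by linarith), abs_of_nonneg hD] at this
    exact this
  set g := D - (d1 - d2) with hgdef
  have hg : 0 ≤ g := by simp [hgdef]; linarith
  -- identity at base level
  have id1 : Real.cosh D - Real.cosh (d1 - d2) =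
      Real.cosh d1 * Real.cosh d2 * (Real.cosh ρ - 1) := by
    rw [hcosh, Real.cosh_sub]; ring
  -- LHS bound
  have kc1 : (0:ℝ) < Real.cosh (k*d1) := Real.cosh_pos _
  have kc2 : (0:ℝ) < Real.cosh (k*d2) := Real.cosh_pos _
  have stepA : Real.cosh (α * ρ) - 1 ≤ α^2 * (Real.cosh ρ - 1) := by
    have h1' : ∀ x : ℝ, Real.cosh x - 1 = 2 * Real.sinh (x/2)^2 := by
      intro x
      have := Real.cosh_two_mul (x/2)
      have h2' := Real.cosh_sq (x/2)
      rw [show 2 * (x/2) = x by ring] at this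
      nlinarith
    rw [h1', h1']
    have hs := sinh_mul_le hα0 hα1 (by linarith : (0:ℝ) ≤ ρ/2)
    have hs0 : 0 ≤ Real.sinh (α * (ρ/2)) := Real.sinh_nonneg_iff.mpr (by positivity)
    have hsr : 0 ≤ Real.sinh (ρ/2) := Real.sinh_nonneg_iff.mpr (by linarith)
    have h3 : Real.sinh (α*(ρ/2))^2 ≤ (α * Real.sinh (ρ/2))^2 :=
      pow_le_pow_left₀ hs0 hs 2
    rw [show α * ρ / 2 = α * (ρ/2) by ring]
    nlinarith
  have stepB : Real.cosh (k*d1) * Real.cosh (k*d2) * α^2 ≤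
      k^2 * (Real.cosh d1 * Real.cosh d2) := by
    have hm := mul_le_mul h1 h2 (mul_nonneg hα0 kc2.le) (by positivity)
    calc Real.cosh (k*d1) * Real.cosh (k*d2) * α^2
        = (α * Real.cosh (k*d1)) * (α * Real.cosh (k*d2)) := by ring
      _ ≤ (k * Real.cosh d1) * (k * Real.cosh d2) := hm
      _ = k^2 * (Real.cosh d1 * Real.cosh d2) := by ring
  -- cosh(kD) expansion
  have hkD : k * D = k * (d1 - d2) + k * g := by rw [hgdef]; ring
  have hD' : D = (d1 - d2) + g := by rw [hgdef]; ring
  have stepC : Real.cosh (k*(d1-d2)) + k^2 * (Real.cosh D - Real.cosh (d1-d2)) ≤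
      Real.cosh (k * D) := by
    rw [hkD, Real.cosh_add, hD', Real.cosh_add]
    have e1 : Real.cosh (d1-d2) ≤ Real.cosh (k*(d1-d2)) := by
      rw [Real.cosh_le_cosh, abs_of_nonneg (by linarith),
        abs_of_nonneg (mul_nonneg (by linarith) (by linarith))]
      nlinarith
    have e2 := cosh_mul_sub_one hk hg
    have e3 := mul_sinh_le hk (by linarith : (0:ℝ) ≤ d1 - d2)
    have e4 := mul_sinh_le hk hg
    have p1 : (0:ℝ) ≤ Real.sinh (d1 - d2) := Real.sinh_nonneg_iff.mpr (by linarith)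
    have p2 : (0:ℝ) ≤ Real.sinh g := Real.sinh_nonneg_iff.mpr hg
    have p3 : (0:ℝ) < Real.cosh (d1-d2) := Real.cosh_pos _
    have p4 : (0:ℝ) < Real.cosh g := Real.cosh_pos _
    have p5 : (1:ℝ) ≤ Real.cosh (k*g) := Real.one_le_cosh _
    have q1 : k^2 * (Real.cosh (d1-d2) * (Real.cosh g - 1)) ≤
        Real.cosh (k*(d1-d2)) * (Real.cosh (k*g) - 1) := by
      calc k^2 * (Real.cosh (d1-d2) * (Real.cosh g - 1))
          = Real.cosh (d1-d2) * (k^2 * (Real.cosh g - 1)) := by ring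
        _ ≤ Real.cosh (d1-d2) * (Real.cosh (k*g) - 1) :=
            mul_le_mul_of_nonneg_left e2 p3.le
        _ ≤ Real.cosh (k*(d1-d2)) * (Real.cosh (k*g) - 1) :=
            mul_le_mul_of_nonneg_right e1 (by linarith)
    have q2 : k^2 * (Real.sinh (d1-d2) * Real.sinh g) ≤
        Real.sinh (k*(d1-d2)) * Real.sinh (k*g) := by
      calc k^2 * (Real.sinh (d1-d2) * Real.sinh g)
          = (k * Real.sinh (d1-d2)) * (k * Real.sinh g) := by ring
        _ ≤ Real.sinh (k*(d1-d2)) * Real.sinh (k*g) := by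
            exact mul_le_mul e3 e4 (mul_nonneg (by linarith : (0:ℝ) ≤ k) p2)
              ((mul_nonneg (by linarith : (0:ℝ) ≤ k) p1).trans e3)
    have expand : k^2 * ((Real.cosh (d1-d2) * Real.cosh g + Real.sinh (d1-d2) * Real.sinh g)
        - Real.cosh (d1-d2)) = k^2 * (Real.cosh (d1-d2) * (Real.cosh g - 1))
        + k^2 * (Real.sinh (d1-d2) * Real.sinh g) := by ring
    linarith [q1, q2, expand]
  -- combine
  have lhs_id : Real.cosh (k*d1) * Real.cosh (k*d2) * Real.cosh (α*ρ)
      - Real.sinh (k*d1) * Real.sinh (k*d2) =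
      Real.cosh (k*d1 - k*d2) + Real.cosh (k*d1) * Real.cosh (k*d2) * (Real.cosh (α*ρ) - 1) := by
    rw [Real.cosh_sub]; ring
  rw [lhs_id]
  have hρm1 : 0 ≤ Real.cosh ρ - 1 := by linarith
  have final1 : Real.cosh (k*d1) * Real.cosh (k*d2) * (Real.cosh (α*ρ) - 1) ≤
      k^2 * (Real.cosh D - Real.cosh (d1-d2)) := by
    calc Real.cosh (k*d1) * Real.cosh (k*d2) * (Real.cosh (α*ρ) - 1)
        ≤ Real.cosh (k*d1) * Real.cosh (k*d2) * (α^2 * (Real.cosh ρ - 1)) :=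
          mul_le_mul_of_nonneg_left stepA (mul_pos kc1 kc2).le
      _ = (Real.cosh (k*d1) * Real.cosh (k*d2) * α^2) * (Real.cosh ρ - 1) := by ring
      _ ≤ (k^2 * (Real.cosh d1 * Real.cosh d2)) * (Real.cosh ρ - 1) :=
          mul_le_mul_of_nonneg_right stepB hρm1
      _ = k^2 * (Real.cosh D - Real.cosh (d1-d2)) := by rw [id1]; ring
  have hkd12 : Real.cosh (k*d1 - k*d2) = Real.cosh (k*(d1-d2)) := by
    rw [show k*d1 - k*d2 = k*(d1-d2) by ring]
  rw [hkd12]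
  linarith [stepC, final1]

lemma main_ineq {k α d1 d2 ρ D : ℝ} (hk : 1 ≤ k) (hα0 : 0 ≤ α) (hα1 : α ≤ 1)
    (hd1 : 0 ≤ d1) (hd2 : 0 ≤ d2) (hρ : 0 ≤ ρ) (hD : 0 ≤ D)
    (h1 : α * Real.cosh (k * d1) ≤ k * Real.cosh d1)
    (h2 : α * Real.cosh (k * d2) ≤ k * Real.cosh d2)
    (hcosh : Real.cosh D =
      Real.cosh d1 * Real.cosh d2 * Real.cosh ρ - Real.sinh d1 * Real.sinh d2) :
    Real.cosh (k * d1) * Real.cosh (k * d2) * Real.cosh (α * ρ)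
      - Real.sinh (k * d1) * Real.sinh (k * d2) ≤ Real.cosh (k * D) := by
  rcases le_total d2 d1 with hle | hle
  · exact main_ineq_aux hk hα0 hα1 hd2 hle hρ hD h1 h2 hcosh
  · have := main_ineq_aux hk hα0 hα1 hd1 hle hρ hD h2 h1 (by rw [hcosh]; ring)
    linarith [this]

lemma arsinh_le_self {x : ℝ} (hx : 0 ≤ x) : Real.arsinh x ≤ x := by
  have h1 : x ≤ Real.sinh x := Real.self_le_sinh_iff.mpr hx
  calc Real.arsinh x ≤ Real.arsinh (Real.sinh x) := Real.arsinh_le_arsinh.mpr h1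
    _ = x := Real.arsinh_sinh x

lemma phi_antitone : AntitoneOn (fun t => Real.arsinh ((2 * Real.sinh t)⁻¹) * Real.cosh t)
    (Ioi (0:ℝ)) := by
  apply antitoneOn_of_deriv_nonpos (convex_Ioi 0)
  · apply ContinuousOn.mul _ Real.continuous_cosh.continuousOn
    apply Real.continuous_arsinh.comp_continuousOn
    apply ContinuousOn.inv₀ (by fun_prop)
    intro x hx
    have : 0 < Real.sinh x := Real.sinh_pos_iff.mpr hx
    positivity
  · rw [interior_Ioi]
    intro x hx
    have hs : 0 < Real.sinh x := Real.sinh_pos_iff.mpr hx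
    apply DifferentiableAt.differentiableWithinAt
    apply DifferentiableAt.mul _ (Real.differentiable_cosh.differentiableAt)
    apply (Real.differentiable_arsinh _).comp
    exact DifferentiableAt.inv (by fun_prop) (by positivity)
  · rw [interior_Ioi]
    intro x hx
    have hs : 0 < Real.sinh x := Real.sinh_pos_iff.mpr hx
    have hc : 0 < Real.cosh x := Real.cosh_pos x
    have hcs : Real.cosh x ^ 2 = Real.sinh x ^ 2 + 1 := Real.cosh_sq x
    set s := Real.sinh x with hsdef
    set c := Real.cosh x with hcdef
    have hne : (2 * s) ≠ 0 := by positivity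
    have h1 : HasDerivAt (fun t => (2 * Real.sinh t)⁻¹) (-(2 * c) / (2 * s)^2) x :=
      ((Real.hasDerivAt_sinh x).const_mul 2).inv hne
    have h2 : HasDerivAt (fun t => Real.arsinh ((2 * Real.sinh t)⁻¹))
        ((Real.sqrt (1 + ((2*s)⁻¹)^2))⁻¹ * (-(2 * c) / (2 * s)^2)) x :=
      (Real.hasDerivAt_arsinh _).comp x h1
    have h3 : HasDerivAt (fun t => Real.arsinh ((2 * Real.sinh t)⁻¹) * Real.cosh t)
        (((Real.sqrt (1 + ((2*s)⁻¹)^2))⁻¹ * (-(2 * c) / (2 * s)^2)) * c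
          + Real.arsinh ((2*s)⁻¹) * s) x :=
      h2.mul (Real.hasDerivAt_cosh x)
    rw [h3.deriv]
    set Q := Real.sqrt (1 + ((2*s)⁻¹)^2) with hQdef
    have hQpos : 0 < Q := Real.sqrt_pos.mpr (by positivity)
    have hQle : Q ≤ c / s := by
      rw [hQdef, show c / s = Real.sqrt ((c/s)^2) from (Real.sqrt_sq (by positivity)).symm]
      apply Real.sqrt_le_sqrt
      rw [div_pow, hcs, le_div_iff₀ (by positivity : (0:ℝ) < s^2)]
      have hinv : ((2*s)⁻¹)^2 * s^2 = 1/4 := by field_simp; ring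
      nlinarith
    have hQinv : s / c ≤ Q⁻¹ := by
      rw [le_inv_comm₀ (by positivity) hQpos, inv_div]
      exact hQle
    have harsinh : Real.arsinh ((2*s)⁻¹) ≤ (2*s)⁻¹ := arsinh_le_self (by positivity)
    have hterm2 : Real.arsinh ((2*s)⁻¹) * s ≤ 1/2 := by
      calc Real.arsinh ((2*s)⁻¹) * s ≤ (2*s)⁻¹ * s :=
            mul_le_mul_of_nonneg_right harsinh hs.le
        _ = 1/2 := by field_simp
    have e1 : Q⁻¹ * (-(2 * c) / (2 * s)^2) * c = -(Q⁻¹ * (c^2 / (2 * s^2))) := by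
      field_simp
    have hterm1 : 1/2 ≤ Q⁻¹ * (c^2/(2*s^2)) := by
      have step : (s/c) * (c^2/(2*s^2)) = c/(2*s) := by field_simp
      have hcs' : s ≤ c := by nlinarith
      have h' : (1:ℝ)/2 ≤ c/(2*s) := by
        rw [le_div_iff₀ (by positivity)]; linarith
      calc (1:ℝ)/2 ≤ c/(2*s) := h'
        _ = (s/c) * (c^2/(2*s^2)) := step.symm
        _ ≤ Q⁻¹ * (c^2/(2*s^2)) := mul_le_mul_of_nonneg_right hQinv (by positivity)
    linarith [e1, hterm1, hterm2]

lemma hdist_nonneg (z w : ℂ) : 0 ≤ hdist z w := by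
  unfold hdist
  have h : 0 ≤ dist z w / (2 * Real.sqrt (z.im * w.im)) :=
    div_nonneg dist_nonneg (by positivity)
  have := Real.arsinh_nonneg_iff.mpr h
  linarith

lemma cosh_hdist (z w : ℂ) (hz : 0 < z.im) (hw : 0 < w.im) :
    Real.cosh (hdist z w) =
      1 + ((z.re - w.re)^2 + (z.im - w.im)^2) / (2 * (z.im * w.im)) := by
  unfold hdist
  rw [Real.cosh_two_mul, Real.cosh_sq, Real.sinh_arsinh]
  have hsq : (2 * Real.sqrt (z.im * w.im))^2 = 4 * (z.im * w.im) := by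
    rw [mul_pow, Real.sq_sqrt (by positivity)]; ring
  have hd : dist z w ^ 2 = (z.re - w.re)^2 + (z.im - w.im)^2 := by
    rw [Complex.dist_eq, Complex.sq_norm, Complex.normSq_apply]
    simp [Complex.sub_re, Complex.sub_im]
    ring
  rw [div_pow, hsq, hd]
  have : (0:ℝ) < z.im * w.im := by positivity
  field_simp
  ring

lemma cosh_hdist_polar {r1 r2 θa θb : ℝ} (h1 : 0 < r1) (h2 : 0 < r2)
    (ha : 0 < Real.sin θa) (hb : 0 < Real.sin θb) :
    Real.cosh (hdist ((r1:ℂ) * Complex.exp (θa * Complex.I))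
      ((r2:ℂ) * Complex.exp (θb * Complex.I))) =
      (Real.cosh (Real.log r1 - Real.log r2) - Real.cos θa * Real.cos θb)
        / (Real.sin θa * Real.sin θb) := by
  have hre1 : ((r1:ℂ) * Complex.exp (θa * Complex.I)).re = r1 * Real.cos θa := by
    simp [Complex.exp_mul_I, Complex.mul_re, Complex.cos_ofReal_re, Complex.sin_ofReal_re]
  have him1 : ((r1:ℂ) * Complex.exp (θa * Complex.I)).im = r1 * Real.sin θa := by
    simp [Complex.exp_mul_I, Complex.mul_im, Complex.cos_ofReal_re, Complex.sin_ofReal_re]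
  have hre2 : ((r2:ℂ) * Complex.exp (θb * Complex.I)).re = r2 * Real.cos θb := by
    simp [Complex.exp_mul_I, Complex.mul_re, Complex.cos_ofReal_re, Complex.sin_ofReal_re]
  have him2 : ((r2:ℂ) * Complex.exp (θb * Complex.I)).im = r2 * Real.sin θb := by
    simp [Complex.exp_mul_I, Complex.mul_im, Complex.cos_ofReal_re, Complex.sin_ofReal_re]
  rw [cosh_hdist _ _ (by rw [him1]; positivity) (by rw [him2]; positivity)]
  rw [hre1, him1, hre2, him2]
  have expand : (r1 * Real.cos θa - r2 * Real.cos θb)^2 + (r1 * Real.sin θa - r2 * Real.sin θb)^2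
      = r1^2 + r2^2 - 2*r1*r2*(Real.cos θa * Real.cos θb + Real.sin θa * Real.sin θb) := by
    have p1 := Real.sin_sq_add_cos_sq θa
    have p2 := Real.sin_sq_add_cos_sq θb
    linear_combination r1^2 * p1 + r2^2 * p2
  rw [expand]
  have hch : Real.cosh (Real.log r1 - Real.log r2) = (r1/r2 + r2/r1)/2 := by
    rw [Real.cosh_eq, ← Real.log_div h1.ne' h2.ne', Real.exp_log (by positivity),
      ← Real.log_inv, Real.exp_log (by positivity)]
    rw [inv_div]
  rw [hch]
  field_simp
  ring

lemma le_of_cosh_le {a b : ℝ} (ha : 0 ≤ a) (hb : 0 ≤ b)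
    (h : Real.cosh a ≤ Real.cosh b) : a ≤ b := by
  have := Real.cosh_le_cosh.mp h
  rwa [abs_of_nonneg ha, abs_of_nonneg hb] at this



set_option maxHeartbeats 2000000 in
/-- Fix `L > 0`, `k ≥ 1`. The map `h_k : C → C_k`,
`h_k (R e^{iθ}) = R^{l_k/l} e^{iθ'}` with `θ' = arccos (tanh (k · arccosh (1 / sin θ)))`,
has the supremum over `C` of the hyperbolic operator norm of its differential,
`max {(l_k/l)·R^{l_k/l-1}, k·cosh d / cosh (k d)}` (`d = arccosh (1/sin θ)`), equal to `k`;
the supremum is attained on the short side `θ = π/2`; consequently `h_k` is `k`-Lipschitz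
for the hyperbolic metrics. -/
theorem stmt10 (L k : ℝ) (hL : 0 < L) (hk : 1 ≤ k)
    (l lk θ₁ : ℝ)
    (hl : l = Real.arsinh (1 / (2 * Real.sinh L)))
    (hlk : lk = Real.arsinh (1 / (2 * Real.sinh (k * L))))
    (hθ₁ : Real.cos θ₁ = Real.tanh L) (hθ₁' : θ₁ ∈ Set.Ioo 0 (π / 2))
    (opnorm : ℝ × ℝ → ℝ)
    (hop : ∀ p : ℝ × ℝ, opnorm p =
      max ((lk / l) * p.1 ^ (lk / l - 1))
        (k * Real.cosh (arccosh (1 / Real.sin p.2)) /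
          Real.cosh (k * arccosh (1 / Real.sin p.2))))
    (C : Set ℂ)
    (hC : C = {z : ℂ | ∃ R θ : ℝ, 1 ≤ R ∧ R ≤ Real.exp (2 * l) ∧ θ₁ ≤ θ ∧ θ ≤ π / 2 ∧
      z = (R : ℂ) * Complex.exp (θ * Complex.I)})
    (h : ℂ → ℂ)
    (hh : ∀ z : ℂ, h z = ((‖z‖ ^ (lk / l) : ℝ) : ℂ) *
      Complex.exp ((Real.arccos (Real.tanh (k * arccosh (1 / Real.sin (Complex.arg z)))) : ℝ)
        * Complex.I)) :
    sSup (opnorm '' (Set.Icc 1 (Real.exp (2 * l)) ×ˢ Set.Icc θ₁ (π / 2))) = k ∧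
    (∀ R : ℝ, R ∈ Set.Icc 1 (Real.exp (2 * l)) → opnorm (R, π / 2) = k) ∧
    (∀ z ∈ C, ∀ w ∈ C, hdist (h z) (h w) ≤ k * hdist z w) := by
  have hπ := Real.pi_pos
  have hsL : 0 < Real.sinh L := Real.sinh_pos_iff.mpr hL
  have hkL : L ≤ k * L := by nlinarith
  have hkL0 : 0 < k * L := by nlinarith
  have hskL : 0 < Real.sinh (k * L) := Real.sinh_pos_iff.mpr hkL0
  have hl0 : 0 < l := by rw [hl]; exact Real.arsinh_pos_iff.mpr (by positivity)
  have hlk0 : 0 < lk := by rw [hlk]; exact Real.arsinh_pos_iff.mpr (by positivity)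
  have hlkle : lk ≤ l := by
    rw [hl, hlk]
    apply Real.arsinh_le_arsinh.mpr
    apply one_div_le_one_div_of_le (by positivity)
    have := Real.sinh_le_sinh.mpr hkL
    linarith
  have hα0 : 0 ≤ lk / l := by positivity
  have hα1 : lk / l ≤ 1 := (div_le_one hl0).mpr hlkle
  -- key endpoint inequality
  have hkey : lk * Real.cosh (k * L) ≤ k * (l * Real.cosh L) := by
    have h1 := phi_antitone (mem_Ioi.mpr hL) (mem_Ioi.mpr hkL0) hkL
    simp only at h1
    rw [hl, hlk, one_div, one_div]
    calc Real.arsinh (2 * Real.sinh (k*L))⁻¹ * Real.cosh (k*L)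
        ≤ Real.arsinh (2 * Real.sinh L)⁻¹ * Real.cosh L := h1
      _ ≤ k * (Real.arsinh (2 * Real.sinh L)⁻¹ * Real.cosh L) := by
          apply le_mul_of_one_le_left _ hk
          have : 0 ≤ Real.arsinh (2 * Real.sinh L)⁻¹ :=
            Real.arsinh_nonneg_iff.mpr (by positivity)
          positivity
  have hαcosh : ∀ d : ℝ, 0 ≤ d → d ≤ L →
      (lk / l) * Real.cosh (k * d) ≤ k * Real.cosh d := by
    intro d hd0 hdL
    have hA := cosh_ratio_mono hk hd0 hdL
    have hcd := Real.cosh_pos d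
    have hcL := Real.cosh_pos L
    have hckd := Real.cosh_pos (k*d)
    have step1 : lk * (Real.cosh (k*d) * Real.cosh L) ≤ lk * (Real.cosh (k*L) * Real.cosh d) :=
      mul_le_mul_of_nonneg_left hA hlk0.le
    have step2 : lk * Real.cosh (k*L) * Real.cosh d ≤ k * (l * Real.cosh L) * Real.cosh d :=
      mul_le_mul_of_nonneg_right hkey hcd.le
    rw [div_mul_eq_mul_div, div_le_iff₀ hl0]
    have hfin : lk * Real.cosh (k*d) * Real.cosh L ≤ k * Real.cosh d * l * Real.cosh L := by
      nlinarith [step1, step2]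
    exact le_of_mul_le_mul_right hfin hcL
  -- bounds for the two components of opnorm
  have hAle : ∀ R : ℝ, 1 ≤ R → (lk / l) * R ^ (lk / l - 1) ≤ k := by
    intro R hR
    have h1 : R ^ (lk / l - 1) ≤ 1 :=
      Real.rpow_le_one_of_one_le_of_nonpos hR (by linarith)
    have h2 : 0 ≤ R ^ (lk / l - 1) := Real.rpow_nonneg (by linarith) _
    nlinarith
  have hsinpos : ∀ θ : ℝ, θ₁ ≤ θ → θ ≤ π / 2 → 0 < Real.sin θ := by
    intro θ hθa hθb
    exact Real.sin_pos_of_pos_of_lt_pi (lt_of_lt_of_le hθ₁'.1 hθa) (by linarith)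
  have hxge : ∀ θ : ℝ, θ₁ ≤ θ → θ ≤ π / 2 → 1 ≤ 1 / Real.sin θ := by
    intro θ hθa hθb
    exact one_le_one_div (hsinpos θ hθa hθb) (Real.sin_le_one θ)
  have hBle : ∀ θ : ℝ, θ₁ ≤ θ → θ ≤ π / 2 →
      k * Real.cosh (arccosh (1 / Real.sin θ)) / Real.cosh (k * arccosh (1 / Real.sin θ)) ≤ k := by
    intro θ hθa hθb
    set d := arccosh (1 / Real.sin θ) with hd
    have hd0 : 0 ≤ d := arccosh_nonneg (hxge θ hθa hθb)
    have hmono : Real.cosh d ≤ Real.cosh (k * d) := by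
      rw [Real.cosh_le_cosh, abs_of_nonneg hd0, abs_of_nonneg (by nlinarith)]
      nlinarith
    rw [div_le_iff₀ (Real.cosh_pos _)]
    nlinarith [Real.cosh_pos d]
  -- part 2
  have part2 : ∀ R : ℝ, R ∈ Set.Icc 1 (Real.exp (2 * l)) → opnorm (R, π / 2) = k := by
    intro R hR
    rw [hop]
    have harc : arccosh (1 / Real.sin (R, π/2).2) = 0 := by
      show arccosh (1 / Real.sin (π/2)) = 0
      rw [Real.sin_pi_div_two]
      unfold arccosh
      norm_num
    rw [harc]
    norm_num
    exact hAle R hR.1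
  -- part 1
  have hone_le : (1:ℝ) ≤ Real.exp (2 * l) := Real.one_le_exp (by positivity)
  have hmem : ((1:ℝ), π / 2) ∈ Set.Icc (1:ℝ) (Real.exp (2 * l)) ×ˢ Set.Icc θ₁ (π / 2) :=
    ⟨⟨le_refl 1, hone_le⟩, ⟨hθ₁'.2.le, le_refl _⟩⟩
  have hub : ∀ x ∈ opnorm '' (Set.Icc 1 (Real.exp (2 * l)) ×ˢ Set.Icc θ₁ (π / 2)), x ≤ k := by
    rintro x ⟨p, hp, rfl⟩
    rw [hop]
    exact max_le (hAle p.1 hp.1.1) (hBle p.2 hp.2.1 hp.2.2)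
  have part1 : sSup (opnorm '' (Set.Icc 1 (Real.exp (2 * l)) ×ˢ Set.Icc θ₁ (π / 2))) = k := by
    apply le_antisymm
    · exact csSup_le ⟨opnorm (1, π/2), Set.mem_image_of_mem _ hmem⟩ hub
    · exact le_csSup ⟨k, hub⟩ ⟨(1, π/2), hmem, part2 1 ⟨le_refl 1, hone_le⟩⟩
  refine ⟨part1, part2, ?_⟩
  -- part 3 : Lipschitz
  -- sin θ₁ = (cosh L)⁻¹
  have hsθ₁ : Real.sin θ₁ = (Real.cosh L)⁻¹ := by
    rw [Real.sin_eq_sqrt_one_sub_cos_sq hθ₁'.1.le (by linarith [hθ₁'.2]), hθ₁]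
    have e : 1 - Real.tanh L ^ 2 = ((Real.cosh L)⁻¹)^2 := by
      rw [Real.tanh_eq_sinh_div_cosh]
      have hc := Real.cosh_pos L
      field_simp
      linarith [Real.cosh_sq L]
    rw [e, Real.sqrt_sq (by positivity)]
  intro z hz w hw
  rw [hC] at hz hw
  obtain ⟨R1, θa, hR1a, hR1b, hθa1, hθa2, hzeq⟩ := hz
  obtain ⟨R2, θb, hR2a, hR2b, hθb1, hθb2, hweq⟩ := hw
  have hR10 : (0:ℝ) < R1 := lt_of_lt_of_le one_pos hR1a
  have hR20 : (0:ℝ) < R2 := lt_of_lt_of_le one_pos hR2a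
  have hsa : 0 < Real.sin θa := hsinpos θa hθa1 hθa2
  have hsb : 0 < Real.sin θb := hsinpos θb hθb1 hθb2
  have hxa : 1 ≤ 1 / Real.sin θa := hxge θa hθa1 hθa2
  have hxb : 1 ≤ 1 / Real.sin θb := hxge θb hθb1 hθb2
  set da := arccosh (1 / Real.sin θa) with hdadef
  set db := arccosh (1 / Real.sin θb) with hdbdef
  have hda0 : 0 ≤ da := arccosh_nonneg hxa
  have hdb0 : 0 ≤ db := arccosh_nonneg hxb
  have hcoshda : Real.cosh da = 1 / Real.sin θa := cosh_arccosh hxa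
  have hcoshdb : Real.cosh db = 1 / Real.sin θb := cosh_arccosh hxb
  have hcosa : 0 ≤ Real.cos θa := Real.cos_nonneg_of_mem_Icc ⟨by linarith [hθ₁'.1], hθa2⟩
  have hcosb : 0 ≤ Real.cos θb := Real.cos_nonneg_of_mem_Icc ⟨by linarith [hθ₁'.1], hθb2⟩
  have hsinh_eq : ∀ θ : ℝ, 0 < Real.sin θ → 0 ≤ Real.cos θ → 1 ≤ 1 / Real.sin θ →
      Real.sinh (arccosh (1 / Real.sin θ)) = Real.cos θ / Real.sin θ := by
    intro θ hs hc hx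
    rw [sinh_arccosh hx]
    have e : (1 / Real.sin θ)^2 - 1 = (Real.cos θ / Real.sin θ)^2 := by
      field_simp
      linarith [Real.sin_sq_add_cos_sq θ]
    rw [e, Real.sqrt_sq (by positivity)]
  have hsinhda : Real.sinh da = Real.cos θa / Real.sin θa := hsinh_eq θa hsa hcosa hxa
  have hsinhdb : Real.sinh db = Real.cos θb / Real.sin θb := hsinh_eq θb hsb hcosb hxb
  -- d ≤ L
  have hsinmono : ∀ θ : ℝ, θ₁ ≤ θ → θ ≤ π/2 → Real.sin θ₁ ≤ Real.sin θ := by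
    intro θ hθa hθb
    exact Real.strictMonoOn_sin.monotoneOn ⟨by linarith [hθ₁'.1], hθ₁'.2.le⟩
      ⟨by linarith [hθ₁'.1], hθb⟩ hθa
  have hdL : ∀ θ : ℝ, (hθa : θ₁ ≤ θ) → (hθb : θ ≤ π/2) →
      arccosh (1 / Real.sin θ) ≤ L := by
    intro θ hθa hθb
    have hx := hxge θ hθa hθb
    have hs := hsinpos θ hθa hθb
    apply le_of_cosh_le (arccosh_nonneg hx) hL.le
    rw [cosh_arccosh hx]
    have h1 : (Real.cosh L)⁻¹ ≤ Real.sin θ := hsθ₁ ▸ hsinmono θ hθa hθb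
    rw [div_le_iff₀ hs]
    have hcL := Real.cosh_pos L
    calc (1:ℝ) = (Real.cosh L)⁻¹ * Real.cosh L := by field_simp
      _ ≤ Real.sin θ * Real.cosh L := mul_le_mul_of_nonneg_right h1 hcL.le
      _ = Real.cosh L * Real.sin θ := by ring
  have hdaL : da ≤ L := hdL θa hθa1 hθa2
  have hdbL : db ≤ L := hdL θb hθb1 hθb2
  -- arg and abs of z, w
  have habsarg : ∀ (R θ : ℝ), 0 < R → θ₁ ≤ θ → θ ≤ π/2 →
      ‖(R:ℂ) * Complex.exp (θ * Complex.I)‖ = R ∧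
      Complex.arg ((R:ℂ) * Complex.exp (θ * Complex.I)) = θ := by
    intro R θ hR hθa hθb
    constructor
    · rw [norm_mul, Complex.norm_real, Complex.norm_exp_ofReal_mul_I, Real.norm_eq_abs, abs_of_pos hR, mul_one]
    · rw [Complex.exp_mul_I]
      exact Complex.arg_mul_cos_add_sin_mul_I hR ⟨by linarith [hθ₁'.1], by linarith⟩
  obtain ⟨habsz, hargz⟩ := habsarg R1 θa hR10 hθa1 hθa2
  obtain ⟨habsw, hargw⟩ := habsarg R2 θb hR20 hθb1 hθb2
  -- image points
  have htanh : ∀ d : ℝ, 0 ≤ d → 0 ≤ Real.tanh (k * d) ∧ Real.tanh (k * d) < 1 := by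
    intro d hd
    have hkd : 0 ≤ k * d := by nlinarith
    have hsnn : 0 ≤ Real.sinh (k*d) := Real.sinh_nonneg_iff.mpr hkd
    have hcp := Real.cosh_pos (k*d)
    have hsc : Real.sinh (k*d) < Real.cosh (k*d) := by
      have := Real.cosh_sub_sinh (k*d)
      have := Real.exp_pos (-(k*d))
      linarith
    rw [Real.tanh_eq_sinh_div_cosh]
    constructor
    · positivity
    · rw [div_lt_one hcp]; exact hsc
  have himg : ∀ (R θ : ℝ) (d : ℝ), 0 < R → 0 ≤ d →
      Real.cos (Real.arccos (Real.tanh (k * d))) = Real.tanh (k * d) ∧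
      Real.sin (Real.arccos (Real.tanh (k * d))) = (Real.cosh (k * d))⁻¹ := by
    intro R θ d hR hd
    obtain ⟨ht0, ht1⟩ := htanh d hd
    constructor
    · exact Real.cos_arccos (by linarith) ht1.le
    · rw [Real.sin_arccos]
      have e : 1 - Real.tanh (k*d)^2 = ((Real.cosh (k*d))⁻¹)^2 := by
        rw [Real.tanh_eq_sinh_div_cosh]
        have hc := Real.cosh_pos (k*d)
        field_simp
        linarith [Real.cosh_sq (k*d)]
      rw [e, Real.sqrt_sq (by positivity)]
  obtain ⟨hcosa', hsina'⟩ := himg R1 θa da hR10 hda0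
  obtain ⟨hcosb', hsinb'⟩ := himg R2 θb db hR20 hdb0
  have hsina'pos : 0 < Real.sin (Real.arccos (Real.tanh (k * da))) := by
    rw [hsina']; positivity
  have hsinb'pos : 0 < Real.sin (Real.arccos (Real.tanh (k * db))) := by
    rw [hsinb']; positivity
  have hhz : h z = ((R1 ^ (lk/l) : ℝ) : ℂ) *
      Complex.exp ((Real.arccos (Real.tanh (k * da)) : ℝ) * Complex.I) := by
    rw [hh z, hzeq, habsz, hargz]
  have hhw : h w = ((R2 ^ (lk/l) : ℝ) : ℂ) *
      Complex.exp ((Real.arccos (Real.tanh (k * db)) : ℝ) * Complex.I) := by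
    rw [hh w, hweq, habsw, hargw]
  -- cosh of distances
  have hcosh_zw : Real.cosh (hdist z w) =
      Real.cosh da * Real.cosh db * Real.cosh (Real.log R1 - Real.log R2)
        - Real.sinh da * Real.sinh db := by
    rw [hzeq, hweq, cosh_hdist_polar hR10 hR20 hsa hsb, hcoshda, hcoshdb, hsinhda, hsinhdb]
    field_simp
  have hcosh_hzw : Real.cosh (hdist (h z) (h w)) =
      Real.cosh (k * da) * Real.cosh (k * db) *
        Real.cosh ((lk/l) * (Real.log R1 - Real.log R2))
        - Real.sinh (k * da) * Real.sinh (k * db) := by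
    rw [hhz, hhw, cosh_hdist_polar (Real.rpow_pos_of_pos hR10 _) (Real.rpow_pos_of_pos hR20 _)
      hsina'pos hsinb'pos]
    rw [Real.log_rpow hR10, Real.log_rpow hR20, hcosa', hcosb', hsina', hsinb']
    rw [Real.tanh_eq_sinh_div_cosh, Real.tanh_eq_sinh_div_cosh]
    rw [show lk/l * Real.log R1 - lk/l * Real.log R2 = lk/l * (Real.log R1 - Real.log R2) by ring]
    have hc1 := Real.cosh_pos (k * da)
    have hc2 := Real.cosh_pos (k * db)
    field_simp
  set ρ := |Real.log R1 - Real.log R2| with hρdef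
  have hcoshρ : Real.cosh (Real.log R1 - Real.log R2) = Real.cosh ρ := (Real.cosh_abs _).symm
  have hcoshαρ : Real.cosh ((lk/l) * (Real.log R1 - Real.log R2)) = Real.cosh ((lk/l) * ρ) := by
    rw [hρdef, ← Real.cosh_abs ((lk/l) * (Real.log R1 - Real.log R2)), abs_mul,
      abs_of_nonneg hα0]
  have hD0 : 0 ≤ hdist z w := hdist_nonneg z w
  have happ := main_ineq hk hα0 hα1 hda0 hdb0 (abs_nonneg _) hD0
    (hαcosh da hda0 hdaL) (hαcosh db hdb0 hdbL)
    (by rw [hcosh_zw, hcoshρ])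
  have hfinal : Real.cosh (hdist (h z) (h w)) ≤ Real.cosh (k * hdist z w) := by
    rw [hcosh_hzw, hcoshαρ]
    exact happ
  exact le_of_cosh_le (hdist_nonneg _ _) (mul_nonneg (by linarith) hD0) hfinal
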